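/- Let T be a tree whose vertex set is a subset of [1,n]. Suppose T contains a path v₁,…,v_k with k ≥ 4 satisfying max(v₁,…,v_k)=v₁, max(v₂,…,v_k)=v_k, and v₂ > v_{k−1}. Then T contains a path w₀, w₁, …, w_{k−1} obtained by reindexing so that the path, viewed as starting at v_k, realizes T as the leading tree of the wheel W(v_k; v₁, v₂, …, v_{k−1}); in particular, among the two Hamiltonian paths of this wheel with prescribed spoke valences, the given path contains the lexicographically largest edge of their symmetric difference, namely v_{k−1}v_k. -/

import Mathlib

open SimpleGraph

private lemma inf_eq_min {α : Type*} [LinearOrder α] {a b : α} : a ⊓ b = min a b := rfl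

private lemma sup_eq_max {α : Type*} [LinearOrder α] {a b : α} : a ⊔ b = max a b := rfl

private lemma walkClosed {V : Type*} {G : SimpleGraph V} {B : Set V}
    (h : ∀ x y, G.Adj x y → x ∈ B → y ∈ B) :
    ∀ {a b : V}, G.Walk a b → a ∈ B → b ∈ B
  | _, _, SimpleGraph.Walk.nil, ha => ha
  | _, _, SimpleGraph.Walk.cons hadj p, ha => walkClosed h p (h _ _ hadj ha)

private lemma reachClosed {V : Type*} {G : SimpleGraph V} {B : Set V}
    (h : ∀ x y, G.Adj x y → x ∈ B → y ∈ B) {a b : V} (hr : G.Reachable a b)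
    (ha : a ∈ B) : b ∈ B := by
  obtain ⟨w⟩ := hr; exact walkClosed h w ha

private lemma reachStart {V : Type*} {G : SimpleGraph V} {a b : V}
    (hr : G.Reachable a b) (hne : a ≠ b) : ∃ y, G.Adj a y := by
  obtain ⟨w⟩ := hr
  cases w with
  | nil => exact absurd rfl hne
  | cons h p => exact ⟨_, h⟩

private lemma mulAdd_lt {M a b c d : ℕ} (hb : b < M) (hd : d < M) :
    a * M + b < c * M + d ↔ (a < c ∨ (a = c ∧ b < d)) := by
  constructor
  · intro h
    rcases lt_trichotomy a c with h' | h' | h'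
    · exact Or.inl h'
    · subst h'; exact Or.inr ⟨rfl, by omega⟩
    · exfalso
      have h2 : c * M + M ≤ a * M := by
        calc c * M + M = (c + 1) * M := by ring
          _ ≤ a * M := mul_le_mul_left (Nat.succ_le_of_lt h') M
      omega
  · rintro (h | ⟨rfl, h⟩)
    · have h2 : a * M + M ≤ c * M := by
        calc a * M + M = (a + 1) * M := by ring
          _ ≤ c * M := mul_le_mul_left (Nat.succ_le_of_lt h) M
      omega
    · omega

private lemma sym2_eq_mk (e : Sym2 ℕ) : e = s(e.inf, e.sup) := by
  induction e using Sym2.ind with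
  | _ a b =>
    rcases le_total a b with h | h
    · rw [Sym2.inf_mk, Sym2.sup_mk, inf_eq_min, sup_eq_max, min_eq_left h, max_eq_right h]
    · rw [Sym2.inf_mk, Sym2.sup_mk, inf_eq_min, sup_eq_max, min_eq_right h, max_eq_left h]
      exact Sym2.eq_swap

private lemma sym2_ext {e f : Sym2 ℕ} (h1 : e.inf = f.inf) (h2 : e.sup = f.sup) : e = f := by
  rw [sym2_eq_mk e, sym2_eq_mk f, h1, h2]

private lemma noReachDel {E : Set (Sym2 ℕ)} {B : Set ℕ} {p q : ℕ}
    (hcl : ∀ x y, s(x, y) ∈ E → s(x, y) ≠ s(p, q) → x ∈ B → y ∈ B)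
    (hp : p ∈ B) (hq : q ∉ B) :
    ¬ (SimpleGraph.fromEdgeSet E \ SimpleGraph.fromEdgeSet {s(p, q)}).Reachable p q := by
  intro hr
  refine hq (reachClosed ?_ hr hp)
  intro x y hxy hx
  rw [sdiff_adj, fromEdgeSet_adj, fromEdgeSet_adj] at hxy
  obtain ⟨⟨h1, h2⟩, h3⟩ := hxy
  refine hcl x y h1 ?_ hx
  intro heq
  exact h3 ⟨heq, h2⟩

private lemma bridgeOfKey {E : Set (Sym2 ℕ)} {a b p q : ℕ}
    (he : s(a, b) = s(p, q))
    (key : ¬ (SimpleGraph.fromEdgeSet E \ SimpleGraph.fromEdgeSet {s(p, q)}).Reachable p q) :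
    ¬ (SimpleGraph.fromEdgeSet E \ SimpleGraph.fromEdgeSet {s(a, b)}).Reachable a b := by
  rw [he]
  rcases Sym2.eq_iff.mp he with ⟨rfl, rfl⟩ | ⟨rfl, rfl⟩
  · exact key
  · exact fun hr => key hr.symm

/-- The graded-lex order on edges of `K_n` restricted to single edges:
`e ≻ f` iff `min e < min f`, or the minima agree and `max e < max f`
(so `12 ≻ 13 ≻ ⋯ ≻ 1n ≻ 23 ≻ ⋯`). -/
def edgeGT (e f : Sym2 ℕ) : Prop :=
  e.inf < f.inf ∨ (e.inf = f.inf ∧ e.sup < f.sup)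

/-- For edge sets of equal size, `E ≻ F` iff the greatest edge of the
symmetric difference `E △ F` belongs to `E`. -/
def edgeSetGT (E F : Set (Sym2 ℕ)) : Prop :=
  ∃ e, e ∈ E ∧ e ∉ F ∧ ∀ f ∈ (E \ F) ∪ (F \ E), f ≠ e → edgeGT e f

/-- `T` is a spanning tree of the vertex set `S`: all edges of `T` lie within
`S`, `T` is acyclic, and any two vertices of `S` are joined by a walk using
only edges of `T`. -/
def IsSpanningTreeOn (S : Set ℕ) (T : Set (Sym2 ℕ)) : Prop :=
  (∀ e ∈ T, ∀ x ∈ e, x ∈ S) ∧ (SimpleGraph.fromEdgeSet T).IsAcyclic ∧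
    ∀ a ∈ S, ∀ b ∈ S, (SimpleGraph.fromEdgeSet T).Reachable a b

/-- The edge set of the wheel with center `c` and spokes `w 0, …, w (r-1)`
(in cyclic order): radii `{c, w i}` and chords `{w i, w ((i+1) % r)}`. -/
def wheelE (c : ℕ) (w : ℕ → ℕ) (r : ℕ) : Set (Sym2 ℕ) :=
  {e | ∃ i < r, e = s(c, w i) ∨ e = s(w i, w ((i + 1) % r))}

/-- The edge set of the path `v 0, v 1, …, v (k-1)`. -/
def pathE (v : ℕ → ℕ) (k : ℕ) : Set (Sym2 ℕ) :=
  {e | ∃ i, i + 1 < k ∧ e = s(v i, v (i + 1))}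

/-- The edge set of the other Hamiltonian path
`v (k-1), v 1, v 2, …, v (k-2), v 0` of the wheel with center `v (k-1)` and
the same spoke valences. -/
def altPathE (v : ℕ → ℕ) (k : ℕ) : Set (Sym2 ℕ) :=
  {e | e = s(v (k - 1), v 1) ∨ e = s(v (k - 2), v 0) ∨
    ∃ i, 1 ≤ i ∧ i + 2 < k ∧ e = s(v i, v (i + 1))}

/-- (ii) ⇒ (i) of Theorem 4.5: a path `v 0, v 1, …, v (k-1)` (`k ≥ 4`, with
vertices in `[1,n]`) whose first vertex is its largest, whose last vertex is
the largest among the rest, and with `v 1 > v (k-2)`, is the leading tree of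
the wheel `W(v (k-1); v 0, …, v (k-2))`: it is a coupled spanning tree of that
wheel which beats every other coupled spanning tree in the graded-lex order.
In particular it contains the largest edge `{v (k-2), v (k-1)}` of the
symmetric difference of the two Hamiltonian paths with the prescribed spoke
valences. -/
theorem stmt17 (n k : ℕ) (hk : 4 ≤ k) (v : ℕ → ℕ)
    (hinj : Set.InjOn v (Set.Iio k))
    (hrange : ∀ i < k, 1 ≤ v i ∧ v i ≤ n)
    (hfirst : ∀ i < k, v i ≤ v 0)
    (hlastmax : ∀ i, 1 ≤ i → i < k → v i ≤ v (k - 1))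
    (hsecond : v (k - 2) < v 1) :
    pathE v k ⊆ wheelE (v (k - 1)) v (k - 1) ∧
    IsSpanningTreeOn (v '' Set.Iio k) (pathE v k) ∧
    IsSpanningTreeOn (v '' Set.Iio k) (wheelE (v (k - 1)) v (k - 1) \ pathE v k) ∧
    (∀ T ⊆ wheelE (v (k - 1)) v (k - 1),
      IsSpanningTreeOn (v '' Set.Iio k) T →
      IsSpanningTreeOn (v '' Set.Iio k) (wheelE (v (k - 1)) v (k - 1) \ T) →
      T ≠ pathE v k → edgeSetGT (pathE v k) T) ∧
    s(v (k - 2), v (k - 1)) ∈ pathE v k ∧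
    (∀ f ∈ (pathE v k \ altPathE v k) ∪ (altPathE v k \ pathE v k),
      f ≠ s(v (k - 2), v (k - 1)) → edgeGT s(v (k - 2), v (k - 1)) f) := by
  obtain ⟨m, rfl⟩ : ∃ m, k = m + 4 := ⟨k - 4, by omega⟩
  have e31 : m + 4 - 1 = m + 3 := rfl
  have e22 : m + 4 - 2 = m + 2 := rfl
  simp only [e31, e22] at hlastmax hsecond ⊢
  -- basic injectivity facts
  have hinj' : ∀ i j, i < m + 4 → j < m + 4 → v i = v j → i = j := fun i j hi hj h =>
    hinj (Set.mem_Iio.mpr hi) (Set.mem_Iio.mpr hj) h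
  have hvne : ∀ i j, i < m + 4 → j < m + 4 → i ≠ j → v i ≠ v j :=
    fun i j hi hj hij h => hij (hinj' i j hi hj h)
  have hltc : ∀ i, 1 ≤ i → i < m + 3 → v i < v (m + 3) := fun i h1 h2 =>
    lt_of_le_of_ne (hlastmax i h1 (by omega)) (hvne i (m + 3) (by omega) (by omega) (by omega))
  have hlt0 : ∀ i, 1 ≤ i → i < m + 4 → v i < v 0 := fun i h1 h2 =>
    lt_of_le_of_ne (hfirst i h2) (hvne i 0 h2 (by omega) (by omega))
  have hc0 : v (m + 3) < v 0 := hlt0 (m + 3) (by omega) (by omega)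
  have hvn : ∀ i, i < m + 4 → v i ≤ n := fun i hi => (hrange i hi).2
  have hS : ∀ i, i < m + 4 → v i ∈ v '' Set.Iio (m + 4) := fun i hi => ⟨i, Set.mem_Iio.mpr hi, rfl⟩
  -- mod facts
  have hmod : ∀ i, i < m + 2 → (i + 1) % (m + 3) = i + 1 := fun i hi => Nat.mod_eq_of_lt (by omega)
  have hmodlast : (m + 2 + 1) % (m + 3) = 0 := by
    have : m + 2 + 1 = m + 3 := rfl
    rw [this, Nat.mod_self]
  -- membership intro
  have hWR : ∀ i, i < m + 3 → s(v (m + 3), v i) ∈ wheelE (v (m + 3)) v (m + 3) :=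
    fun i hi => ⟨i, hi, Or.inl rfl⟩
  have hWC : ∀ i, i < m + 2 → s(v i, v (i + 1)) ∈ wheelE (v (m + 3)) v (m + 3) :=
    fun i hi => ⟨i, by omega, Or.inr (by rw [hmod i hi])⟩
  have hWCl : s(v (m + 2), v 0) ∈ wheelE (v (m + 3)) v (m + 3) :=
    ⟨m + 2, by omega, Or.inr (by rw [hmodlast])⟩
  have hPC : ∀ i, i ≤ m + 2 → s(v i, v (i + 1)) ∈ pathE v (m + 4) :=
    fun i hi => ⟨i, by omega, rfl⟩
  have hPRl : s(v (m + 3), v (m + 2)) ∈ pathE v (m + 4) := ⟨m + 2, by omega, Sym2.eq_swap⟩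
  -- non-membership
  have hnPR : ∀ i, i < m + 2 → s(v (m + 3), v i) ∉ pathE v (m + 4) := by
    rintro i hi ⟨j, hj, he⟩
    rcases Sym2.eq_iff.mp he with ⟨h1, h2⟩ | ⟨h1, h2⟩
    · have := hinj' (m + 3) j (by omega) (by omega) h1; omega
    · have := hinj' (m + 3) (j + 1) (by omega) (by omega) h1
      have := hinj' i j (by omega) (by omega) h2
      omega
  have hnPCl : s(v (m + 2), v 0) ∉ pathE v (m + 4) := by
    rintro ⟨j, hj, he⟩
    rcases Sym2.eq_iff.mp he with ⟨h1, h2⟩ | ⟨h1, h2⟩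
    · have := hinj' 0 (j + 1) (by omega) (by omega) h2; omega
    · have := hinj' (m + 2) (j + 1) (by omega) (by omega) h1
      have := hinj' 0 j (by omega) (by omega) h2
      omega
  -- decode of wheel-minus-path
  have hDdecode : ∀ e ∈ wheelE (v (m + 3)) v (m + 3), e ∉ pathE v (m + 4) →
      (∃ i, i < m + 2 ∧ e = s(v (m + 3), v i)) ∨ e = s(v (m + 2), v 0) := by
    rintro e ⟨i, hi, he | he⟩ hnp
    · rcases Nat.lt_or_ge i (m + 2) with h | h
      · exact Or.inl ⟨i, h, he⟩
      · have : i = m + 2 := by omega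
        subst this
        exact absurd (show e ∈ pathE v (m + 4) by rw [he]; exact hPRl) hnp
    · rcases Nat.lt_or_ge i (m + 2) with h | h
      · rw [hmod i h] at he
        exact absurd (show e ∈ pathE v (m + 4) by rw [he]; exact hPC i (by omega)) hnp
      · have : i = m + 2 := by omega
        subst this
        rw [hmodlast] at he
        exact Or.inr he
  -- wheel edges at a vertex
  have hWat : ∀ e ∈ wheelE (v (m + 3)) v (m + 3), ∀ t, t < m + 3 → v t ∈ e →
      e = s(v (m + 3), v t) ∨ (t < m + 2 ∧ e = s(v t, v (t + 1))) ∨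
      (t = m + 2 ∧ e = s(v (m + 2), v 0)) ∨ (∃ u, u + 1 = t ∧ e = s(v u, v t)) ∨
      (t = 0 ∧ e = s(v (m + 2), v 0)) := by
    rintro e ⟨i, hi, rfl | rfl⟩ t ht hte
    · rcases Sym2.mem_iff.mp hte with h | h
      · exact absurd (hinj' t (m + 3) (by omega) (by omega) h) (by omega)
      · have hti : t = i := hinj' t i (by omega) (by omega) h
        subst hti; exact Or.inl rfl
    · rcases Nat.lt_or_ge i (m + 2) with hlt | hge
      · rw [hmod i hlt] at hte ⊢
        rcases Sym2.mem_iff.mp hte with h | h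
        · have hti : t = i := hinj' t i (by omega) (by omega) h
          subst hti; exact Or.inr (Or.inl ⟨by omega, rfl⟩)
        · have hti : t = i + 1 := hinj' t (i + 1) (by omega) (by omega) h
          subst hti; exact Or.inr (Or.inr (Or.inr (Or.inl ⟨i, rfl, rfl⟩)))
      · have hie : i = m + 2 := by omega
        subst hie
        rw [hmodlast] at hte ⊢
        rcases Sym2.mem_iff.mp hte with h | h
        · have hti : t = m + 2 := hinj' t (m + 2) (by omega) (by omega) h
          subst hti; exact Or.inr (Or.inr (Or.inl ⟨rfl, rfl⟩))
        · have hti : t = 0 := hinj' t 0 (by omega) (by omega) h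
          subst hti; exact Or.inr (Or.inr (Or.inr (Or.inr ⟨rfl, rfl⟩)))
  -- Part 1
  have hPart1 : pathE v (m + 4) ⊆ wheelE (v (m + 3)) v (m + 3) := by
    rintro e ⟨i, hi, rfl⟩
    rcases Nat.lt_or_ge i (m + 2) with h | h
    · exact hWC i h
    · have : i = m + 2 := by omega
      subst this
      exact ⟨m + 2, by omega, Or.inl Sym2.eq_swap⟩
  -- Part 2: the path is a spanning tree
  have hPart2 : IsSpanningTreeOn (v '' Set.Iio (m + 4)) (pathE v (m + 4)) := by
    refine ⟨?_, ?_, ?_⟩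
    · rintro e ⟨i, hi, rfl⟩ x hx
      rcases Sym2.mem_iff.mp hx with rfl | rfl
      exacts [hS i (by omega), hS (i + 1) (by omega)]
    · rw [isAcyclic_iff_forall_adj_isBridge]
      intro a b hab
      obtain ⟨⟨i, hi, he⟩, hne0⟩ := (fromEdgeSet_adj _).mp hab
      rw [isBridge_iff]
      refine bridgeOfKey he (noReachDel (B := {x | ∃ t, t ≤ i ∧ x = v t}) ?_ ⟨i, le_refl i, rfl⟩ ?_)
      · rintro x y ⟨j, hj, hxe⟩ hne1 ⟨t, ht, rfl⟩
        have hjne : j ≠ i := by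
          rintro rfl; exact hne1 hxe
        rcases Sym2.eq_iff.mp hxe with ⟨h1, h2⟩ | ⟨h1, h2⟩
        · have htj : t = j := hinj' t j (by omega) (by omega) h1
          exact ⟨j + 1, by omega, h2⟩
        · have htj : t = j + 1 := hinj' t (j + 1) (by omega) (by omega) h1
          exact ⟨j, by omega, h2⟩
      · rintro ⟨t, ht, hteq⟩
        have : i + 1 = t := hinj' (i + 1) t (by omega) (by omega) hteq
        omega
    · have hreach : ∀ i, i < m + 4 →
          (SimpleGraph.fromEdgeSet (pathE v (m + 4))).Reachable (v 0) (v i) := by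
        intro i
        induction i with
        | zero => exact fun _ => Reachable.refl _
        | succ j ih =>
          intro hj
          have h1 : (SimpleGraph.fromEdgeSet (pathE v (m + 4))).Adj (v j) (v (j + 1)) :=
            (fromEdgeSet_adj _).mpr ⟨hPC j (by omega), hvne j (j + 1) (by omega) (by omega) (by omega)⟩
          exact (ih (by omega)).trans h1.reachable
      rintro a ⟨i, hi, rfl⟩ b ⟨j, hj, rfl⟩
      exact (hreach i (Set.mem_Iio.mp hi)).symm.trans (hreach j (Set.mem_Iio.mp hj))
  -- Part 3: the complement (star plus one edge) is a spanning tree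
  have hPart3 : IsSpanningTreeOn (v '' Set.Iio (m + 4))
      (wheelE (v (m + 3)) v (m + 3) \ pathE v (m + 4)) := by
    refine ⟨?_, ?_, ?_⟩
    · rintro e he x hx
      rcases hDdecode e he.1 he.2 with ⟨i, hi, rfl⟩ | rfl
      · rcases Sym2.mem_iff.mp hx with rfl | rfl
        exacts [hS (m + 3) (by omega), hS i (by omega)]
      · rcases Sym2.mem_iff.mp hx with rfl | rfl
        exacts [hS (m + 2) (by omega), hS 0 (by omega)]
    · rw [isAcyclic_iff_forall_adj_isBridge]
      intro a b hab
      obtain ⟨hmem, hne0⟩ := (fromEdgeSet_adj _).mp hab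
      rw [isBridge_iff]
      rcases hDdecode _ hmem.1 hmem.2 with ⟨i, hi, he⟩ | he
      · rcases Nat.eq_zero_or_pos i with rfl | hipos
        · -- delete the radius at v 0 : component {v 0, v (m+2)}
          refine bridgeOfKey (he.trans Sym2.eq_swap)
            (noReachDel (B := {x | x = v 0 ∨ x = v (m + 2)}) ?_ (Or.inl rfl) ?_)
          · rintro x y hyD hne1 (rfl | rfl)
            · rcases hDdecode _ hyD.1 hyD.2 with ⟨j, hj, hxe⟩ | hxe
              · rcases Sym2.eq_iff.mp hxe with ⟨h1, h2⟩ | ⟨h1, h2⟩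
                · exact absurd (hinj' 0 (m + 3) (by omega) (by omega) h1) (by omega)
                · exact absurd (show s(v 0, y) = s(v 0, v (m + 3)) by rw [h2]) hne1
              · rcases Sym2.eq_iff.mp hxe with ⟨h1, h2⟩ | ⟨h1, h2⟩
                · exact absurd (hinj' 0 (m + 2) (by omega) (by omega) h1) (by omega)
                · exact Or.inr h2
            · rcases hDdecode _ hyD.1 hyD.2 with ⟨j, hj, hxe⟩ | hxe
              · rcases Sym2.eq_iff.mp hxe with ⟨h1, h2⟩ | ⟨h1, h2⟩
                · exact absurd (hinj' (m + 2) (m + 3) (by omega) (by omega) h1) (by omega)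
                · exact absurd (hinj' (m + 2) j (by omega) (by omega) h1) (by omega)
              · rcases Sym2.eq_iff.mp hxe with ⟨h1, h2⟩ | ⟨h1, h2⟩
                · exact Or.inl h2
                · exact absurd (hinj' (m + 2) 0 (by omega) (by omega) h1) (by omega)
          · rintro (h | h)
            · exact hvne (m + 3) 0 (by omega) (by omega) (by omega) h
            · exact hvne (m + 3) (m + 2) (by omega) (by omega) (by omega) h
        · -- delete a radius at v i, 1 ≤ i < m + 2 : component {v i}
          refine bridgeOfKey (he.trans Sym2.eq_swap)
            (noReachDel (B := {x | x = v i}) ?_ rfl ?_)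
          · rintro x y hyD hne1 rfl
            rcases hDdecode _ hyD.1 hyD.2 with ⟨j, hj, hxe⟩ | hxe
            · rcases Sym2.eq_iff.mp hxe with ⟨h1, h2⟩ | ⟨h1, h2⟩
              · exact absurd (hinj' i (m + 3) (by omega) (by omega) h1) (by omega)
              · exact absurd (show s(v i, y) = s(v i, v (m + 3)) by rw [h2]) hne1
            · rcases Sym2.eq_iff.mp hxe with ⟨h1, h2⟩ | ⟨h1, h2⟩
              · exact absurd (hinj' i (m + 2) (by omega) (by omega) h1) (by omega)
              · exact absurd (hinj' i 0 (by omega) (by omega) h1) (by omega)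
          · exact hvne (m + 3) i (by omega) (by omega) (by omega)
      · -- delete the chord s(v (m+2), v 0) : component {v (m+2)}
        refine bridgeOfKey he (noReachDel (B := {x | x = v (m + 2)}) ?_ rfl ?_)
        · rintro x y hyD hne1 rfl
          rcases hDdecode _ hyD.1 hyD.2 with ⟨j, hj, hxe⟩ | hxe
          · rcases Sym2.eq_iff.mp hxe with ⟨h1, h2⟩ | ⟨h1, h2⟩
            · exact absurd (hinj' (m + 2) (m + 3) (by omega) (by omega) h1) (by omega)
            · exact absurd (hinj' (m + 2) j (by omega) (by omega) h1) (by omega)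
          · rcases Sym2.eq_iff.mp hxe with ⟨h1, h2⟩ | ⟨h1, h2⟩
            · exact absurd (show s(v (m + 2), y) = s(v (m + 2), v 0) by rw [h2]) hne1
            · exact absurd (hinj' (m + 2) 0 (by omega) (by omega) h1) (by omega)
        · exact hvne 0 (m + 2) (by omega) (by omega) (by omega)
    · have hAdjR : ∀ i, i < m + 2 → (SimpleGraph.fromEdgeSet
          (wheelE (v (m + 3)) v (m + 3) \ pathE v (m + 4))).Adj (v i) (v (m + 3)) := by
        intro i hi
        refine (fromEdgeSet_adj _).mpr ⟨?_, hvne i (m + 3) (by omega) (by omega) (by omega)⟩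
        rw [Sym2.eq_swap]
        exact ⟨hWR i (by omega), hnPR i hi⟩
      have hreachD : ∀ i, i < m + 4 → (SimpleGraph.fromEdgeSet
          (wheelE (v (m + 3)) v (m + 3) \ pathE v (m + 4))).Reachable (v i) (v (m + 3)) := by
        intro i hi
        rcases Nat.lt_or_ge i (m + 2) with h | h
        · exact (hAdjR i h).reachable
        · rcases Nat.lt_or_ge i (m + 3) with h' | h'
          · have hieq : i = m + 2 := by omega
            subst hieq
            have h2 : (SimpleGraph.fromEdgeSet
                (wheelE (v (m + 3)) v (m + 3) \ pathE v (m + 4))).Adj (v (m + 2)) (v 0) :=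
              (fromEdgeSet_adj _).mpr ⟨⟨hWCl, hnPCl⟩,
                hvne (m + 2) 0 (by omega) (by omega) (by omega)⟩
            exact h2.reachable.trans (hAdjR 0 (by omega)).reachable
          · have hieq : i = m + 3 := by omega
            subst hieq
            exact Reachable.refl _
      rintro a ⟨i, hi, rfl⟩ b ⟨j, hj, rfl⟩
      exact (hreachD i (Set.mem_Iio.mp hi)).trans (hreachD j (Set.mem_Iio.mp hj)).symm
  -- Part 4: maximality among coupled spanning trees
  have hPart4 : ∀ T ⊆ wheelE (v (m + 3)) v (m + 3),
      IsSpanningTreeOn (v '' Set.Iio (m + 4)) T →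
      IsSpanningTreeOn (v '' Set.Iio (m + 4)) (wheelE (v (m + 3)) v (m + 3) \ T) →
      T ≠ pathE v (m + 4) → edgeSetGT (pathE v (m + 4)) T := by
    intro T hTW hT hT' hTne
    have hWfin : (wheelE (v (m + 3)) v (m + 3)).Finite := by
      apply Set.Finite.subset (Set.Finite.union
        ((Set.finite_Iio (m + 3)).image (fun i => s(v (m + 3), v i)))
        ((Set.finite_Iio (m + 3)).image (fun i => s(v i, v ((i + 1) % (m + 3))))))
      rintro e ⟨i, hi, rfl | rfl⟩
      · exact Or.inl ⟨i, hi, rfl⟩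
      · exact Or.inr ⟨i, hi, rfl⟩
    have hΔsub : (pathE v (m + 4) \ T ∪ T \ pathE v (m + 4)) ⊆ wheelE (v (m + 3)) v (m + 3) := by
      rintro e (⟨h, _⟩ | ⟨h, _⟩)
      exacts [hPart1 h, hTW h]
    have hΔfin := hWfin.subset hΔsub
    have hΔne : (pathE v (m + 4) \ T ∪ T \ pathE v (m + 4)).Nonempty := by
      by_contra h
      rw [Set.not_nonempty_iff_eq_empty, Set.union_empty_iff] at h
      exact hTne (Set.Subset.antisymm (Set.diff_eq_empty.mp h.2) (Set.diff_eq_empty.mp h.1))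
    obtain ⟨f, hfD, hfmin0⟩ :=
      Set.exists_min_image _ (fun e => e.inf * (n + 1) + e.sup) hΔfin hΔne
    have hfmin : ∀ g ∈ (pathE v (m + 4) \ T ∪ T \ pathE v (m + 4)),
        f.inf * (n + 1) + f.sup ≤ g.inf * (n + 1) + g.sup := fun g hg => hfmin0 g hg
    have hWle : ∀ e ∈ wheelE (v (m + 3)) v (m + 3), e.inf ≤ n ∧ e.sup ≤ n := by
      rintro e ⟨i, hi, rfl | rfl⟩
      · have h1 := hvn (m + 3) (by omega)
        have h2 := hvn i (by omega)
        constructor <;>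
          simp only [Sym2.inf_mk, Sym2.sup_mk, inf_eq_min, sup_eq_max, min_def, max_def] <;>
          split_ifs <;> omega
      · have h1 := hvn i (by omega)
        have h2 := hvn ((i + 1) % (m + 3)) (by
          have := Nat.mod_lt (i + 1) (show 0 < m + 3 by omega); omega)
        constructor <;>
          simp only [Sym2.inf_mk, Sym2.sup_mk, inf_eq_min, sup_eq_max, min_def, max_def] <;>
          split_ifs <;> omega
    have hGTf : ∀ g ∈ (pathE v (m + 4) \ T ∪ T \ pathE v (m + 4)), g ≠ f → edgeGT f g := by
      intro g hg hgf
      have hle := hfmin g hg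
      obtain ⟨hfi, hfs⟩ := hWle f (hΔsub hfD)
      obtain ⟨hgi, hgs⟩ := hWle g (hΔsub hg)
      have hlt : f.inf * (n + 1) + f.sup < g.inf * (n + 1) + g.sup := by
        rcases lt_or_eq_of_le hle with h | h
        · exact h
        · exfalso
          have hsup : f.sup = g.sup := by
            have h1 : (f.inf * (n + 1) + f.sup) % (n + 1) = f.sup := by
              rw [mul_comm, Nat.mul_add_mod]; exact Nat.mod_eq_of_lt (by omega)
            have h2 : (g.inf * (n + 1) + g.sup) % (n + 1) = g.sup := by
              rw [mul_comm, Nat.mul_add_mod]; exact Nat.mod_eq_of_lt (by omega)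
            rw [← h1, ← h2, h]
          have hinf : f.inf = g.inf := by
            have h3 : f.inf * (n + 1) = g.inf * (n + 1) := by omega
            exact Nat.eq_of_mul_eq_mul_right (by omega) h3
          exact hgf (sym2_ext hinf.symm hsup.symm)
      unfold edgeGT
      exact (mulAdd_lt (by omega) (by omega)).mp hlt
    rcases hfD with hfP | hfT
    · exact ⟨f, hfP.1, hfP.2, fun g hg hgf => hGTf g hg hgf⟩
    · exfalso
      have hagree : ∀ g ∈ wheelE (v (m + 3)) v (m + 3),
          g.inf * (n + 1) + g.sup < f.inf * (n + 1) + f.sup →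
          (g ∈ T ↔ g ∈ pathE v (m + 4)) := by
        intro g hgW hKlt
        constructor
        · intro hgT
          by_contra hgP
          exact absurd (hfmin g (Or.inr ⟨hgT, hgP⟩)) (by omega)
        · intro hgP
          by_contra hgT
          exact absurd (hfmin g (Or.inl ⟨hgP, hgT⟩)) (by omega)
      have hKlt : ∀ a b c d : ℕ, a ≤ n → b ≤ n → c ≤ n → d ≤ n →
          (min a b < min c d ∨ (min a b = min c d ∧ max a b < max c d)) →
          s(a, b).inf * (n + 1) + s(a, b).sup < s(c, d).inf * (n + 1) + s(c, d).sup := by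
        intro a b c d ha hb hc hd h
        simp only [Sym2.inf_mk, Sym2.sup_mk, inf_eq_min, sup_eq_max]
        rw [mulAdd_lt (by simp only [max_def]; split_ifs <;> omega)
          (by simp only [max_def]; split_ifs <;> omega)]
        exact h
      rcases hDdecode f (hTW hfT.1) hfT.2 with ⟨i, hi, rfl⟩ | rfl
      · -- f is a radius s(v (m+3), v i), i < m + 2
        by_cases hi0 : i = 0
        · subst hi0
          -- all relevant smaller edges agree with the path
          have hC0T : s(v 0, v 1) ∈ T := by
            have f1 := hltc 1 (by omega) (by omega)
            have f2 := hc0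
            refine (hagree s(v 0, v 1) (hWC 0 (by omega)) (hKlt _ _ _ _ (hvn _ (by omega)) (hvn _ (by omega))
              (hvn _ (by omega)) (hvn _ (by omega)) ?_)).mpr (hPC 0 (by omega))
            simp only [min_def, max_def]; split_ifs <;> omega
          have hRlT : s(v (m + 3), v (m + 2)) ∈ T := by
            have f1 := hltc (m + 2) (by omega) (by omega)
            have f2 := hc0
            refine (hagree _ (hWR (m + 2) (by omega)) (hKlt _ _ _ _ (hvn _ (by omega)) (hvn _ (by omega))
              (hvn _ (by omega)) (hvn _ (by omega)) ?_)).mpr hPRl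
            simp only [min_def, max_def]; split_ifs <;> omega
          have hCl2T : s(v (m + 1), v (m + 2)) ∈ T := by
            have f1 := hltc (m + 1) (by omega) (by omega)
            have f2 := hltc (m + 2) (by omega) (by omega)
            have f3 := hc0
            have f4 := hvne (m + 1) (m + 2) (by omega) (by omega) (by omega)
            refine (hagree s(v (m + 1), v (m + 2)) (hWC (m + 1) (by omega)) (hKlt _ _ _ _ (hvn _ (by omega)) (hvn _ (by omega))
              (hvn _ (by omega)) (hvn _ (by omega)) ?_)).mpr (hPC (m + 1) (by omega))
            simp only [min_def, max_def]; split_ifs <;> omega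
          have hClnT : s(v (m + 2), v 0) ∉ T := by
            intro hmem
            have f1 := hltc (m + 2) (by omega) (by omega)
            have f2 := hc0
            have f3 := hlt0 (m + 2) (by omega) (by omega)
            refine hnPCl ((hagree _ hWCl (hKlt _ _ _ _ (hvn _ (by omega)) (hvn _ (by omega))
              (hvn _ (by omega)) (hvn _ (by omega)) ?_)).mp hmem)
            simp only [min_def, max_def]; split_ifs <;> omega
          have hreach := hT'.2.2 (v 0) (hS 0 (by omega)) (v (m + 3)) (hS (m + 3) (by omega))
          have hcl : ∀ x y, (SimpleGraph.fromEdgeSet (wheelE (v (m + 3)) v (m + 3) \ T)).Adj x y →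
              x ∈ {x | x = v 0 ∨ x = v (m + 2)} → y ∈ {x | x = v 0 ∨ x = v (m + 2)} := by
            intro x y hxy hx
            obtain ⟨⟨hxW, hxT⟩, hxyne⟩ := (fromEdgeSet_adj _).mp hxy
            rcases hx with rfl | rfl
            · rcases hWat _ hxW 0 (by omega) (Sym2.mem_mk_left _ _) with
                h | ⟨ht, h⟩ | ⟨ht, h⟩ | ⟨u, hu, h⟩ | ⟨ht, h⟩
              · exact (hxT (by rw [h]; exact hfT.1)).elim
              · exact (hxT (by rw [h]; exact hC0T)).elim
              · exact absurd ht (by omega)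
              · exact absurd hu (by omega)
              · rcases Sym2.eq_iff.mp h with ⟨h1, h2⟩ | ⟨h1, h2⟩
                · exact absurd (hinj' 0 (m + 2) (by omega) (by omega) h1) (by omega)
                · exact Or.inr h2
            · rcases hWat _ hxW (m + 2) (by omega) (Sym2.mem_mk_left _ _) with
                h | ⟨ht, h⟩ | ⟨ht, h⟩ | ⟨u, hu, h⟩ | ⟨ht, h⟩
              · exact (hxT (by rw [h]; exact hRlT)).elim
              · exact absurd ht (by omega)
              · rcases Sym2.eq_iff.mp h with ⟨h1, h2⟩ | ⟨h1, h2⟩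
                · exact Or.inl h2
                · exact absurd (hinj' (m + 2) 0 (by omega) (by omega) h1) (by omega)
              · have huu : u = m + 1 := by omega
                subst huu
                exact (hxT (by rw [h]; exact hCl2T)).elim
              · exact absurd ht (by omega)
          rcases reachClosed hcl hreach (Or.inl rfl) with h | h
          · exact hvne (m + 3) 0 (by omega) (by omega) (by omega) h
          · exact hvne (m + 3) (m + 2) (by omega) (by omega) (by omega) h
        · by_cases hi1 : i = 1
          · subst hi1
            -- f = s(v (m+3), v 1)
            have hC1T : s(v 1, v 2) ∈ T := by
              have f1 := hltc 1 (by omega) (by omega)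
              have f2 := hltc 2 (by omega) (by omega)
              have f3 := hvne 1 2 (by omega) (by omega) (by omega)
              refine (hagree s(v 1, v 2) (hWC 1 (by omega)) (hKlt _ _ _ _ (hvn _ (by omega)) (hvn _ (by omega))
                (hvn _ (by omega)) (hvn _ (by omega)) ?_)).mpr (hPC 1 (by omega))
              simp only [min_def, max_def]; split_ifs <;> omega
            have hRlT : s(v (m + 3), v (m + 2)) ∈ T := by
              have f1 := hltc 1 (by omega) (by omega)
              have f2 := hltc (m + 2) (by omega) (by omega)
              have f3 := hsecond
              refine (hagree _ (hWR (m + 2) (by omega)) (hKlt _ _ _ _ (hvn _ (by omega)) (hvn _ (by omega))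
                (hvn _ (by omega)) (hvn _ (by omega)) ?_)).mpr hPRl
              simp only [min_def, max_def]; split_ifs <;> omega
            have hCl2T : s(v (m + 1), v (m + 2)) ∈ T := by
              have f1 := hltc 1 (by omega) (by omega)
              have f2 := hltc (m + 2) (by omega) (by omega)
              have f3 := hltc (m + 1) (by omega) (by omega)
              have f4 := hsecond
              have f5 := hvne (m + 1) (m + 2) (by omega) (by omega) (by omega)
              refine (hagree s(v (m + 1), v (m + 2)) (hWC (m + 1) (by omega)) (hKlt _ _ _ _ (hvn _ (by omega)) (hvn _ (by omega))
                (hvn _ (by omega)) (hvn _ (by omega)) ?_)).mpr (hPC (m + 1) (by omega))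
              simp only [min_def, max_def]; split_ifs <;> omega
            have hClnT : s(v (m + 2), v 0) ∉ T := by
              intro hmem
              have f1 := hltc 1 (by omega) (by omega)
              have f2 := hltc (m + 2) (by omega) (by omega)
              have f3 := hsecond
              have f4 := hlt0 (m + 2) (by omega) (by omega)
              refine hnPCl ((hagree _ hWCl (hKlt _ _ _ _ (hvn _ (by omega)) (hvn _ (by omega))
                (hvn _ (by omega)) (hvn _ (by omega)) ?_)).mp hmem)
              simp only [min_def, max_def]; split_ifs <;> omega
            -- the only complement edge at v 1 is s(v 0, v 1)
            obtain ⟨y, hy⟩ := reachStart (hT'.2.2 (v 1) (hS 1 (by omega)) (v (m + 3))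
              (hS (m + 3) (by omega))) (hvne 1 (m + 3) (by omega) (by omega) (by omega))
            obtain ⟨⟨hyW, hyT⟩, hyne⟩ := (fromEdgeSet_adj _).mp hy
            have hC0nT : s(v 0, v 1) ∉ T := by
              rcases hWat _ hyW 1 (by omega) (Sym2.mem_mk_left _ _) with
                h | ⟨ht, h⟩ | ⟨ht, h⟩ | ⟨u, hu, h⟩ | ⟨ht, h⟩
              · exact (hyT (by rw [h]; exact hfT.1)).elim
              · exact (hyT (by rw [h]; exact hC1T)).elim
              · exact absurd ht (by omega)
              · have huu : u = 0 := by omega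
                subst huu
                exact fun hmem => hyT (by rw [h]; exact hmem)
              · exact absurd ht (by omega)
            -- T must contain the radius at v 0
            obtain ⟨z, hz⟩ := reachStart (hT.2.2 (v 0) (hS 0 (by omega)) (v (m + 3))
              (hS (m + 3) (by omega))) (hvne 0 (m + 3) (by omega) (by omega) (by omega))
            obtain ⟨hzT, hzne⟩ := (fromEdgeSet_adj _).mp hz
            have hR0T : s(v (m + 3), v 0) ∈ T := by
              rcases hWat _ (hTW hzT) 0 (by omega) (Sym2.mem_mk_left _ _) with
                h | ⟨ht, h⟩ | ⟨ht, h⟩ | ⟨u, hu, h⟩ | ⟨ht, h⟩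
              · rw [← h]; exact hzT
              · exact ((hC0nT (by rw [← h]; exact hzT))).elim
              · exact absurd ht (by omega)
              · exact absurd hu (by omega)
              · exact (hClnT (by rw [← h]; exact hzT)).elim
            -- complement component of v 1 is {v 0, v 1, v (m+2)}
            have hcl : ∀ x y, (SimpleGraph.fromEdgeSet (wheelE (v (m + 3)) v (m + 3) \ T)).Adj x y →
                x ∈ {x | x = v 0 ∨ x = v 1 ∨ x = v (m + 2)} →
                y ∈ {x | x = v 0 ∨ x = v 1 ∨ x = v (m + 2)} := by
              intro x y hxy hx
              obtain ⟨⟨hxW, hxT⟩, hxyne⟩ := (fromEdgeSet_adj _).mp hxy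
              rcases hx with rfl | rfl | rfl
              · rcases hWat _ hxW 0 (by omega) (Sym2.mem_mk_left _ _) with
                  h | ⟨ht, h⟩ | ⟨ht, h⟩ | ⟨u, hu, h⟩ | ⟨ht, h⟩
                · exact (hxT (by rw [h]; exact hR0T)).elim
                · rcases Sym2.eq_iff.mp h with ⟨h1, h2⟩ | ⟨h1, h2⟩
                  · exact Or.inr (Or.inl h2)
                  · exact absurd (hinj' 0 1 (by omega) (by omega) h1) (by omega)
                · exact absurd ht (by omega)
                · exact absurd hu (by omega)
                · rcases Sym2.eq_iff.mp h with ⟨h1, h2⟩ | ⟨h1, h2⟩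
                  · exact absurd (hinj' 0 (m + 2) (by omega) (by omega) h1) (by omega)
                  · exact Or.inr (Or.inr h2)
              · rcases hWat _ hxW 1 (by omega) (Sym2.mem_mk_left _ _) with
                  h | ⟨ht, h⟩ | ⟨ht, h⟩ | ⟨u, hu, h⟩ | ⟨ht, h⟩
                · exact (hxT (by rw [h]; exact hfT.1)).elim
                · exact (hxT (by rw [h]; exact hC1T)).elim
                · exact absurd ht (by omega)
                · have huu : u = 0 := by omega
                  subst huu
                  rcases Sym2.eq_iff.mp h with ⟨h1, h2⟩ | ⟨h1, h2⟩
                  · exact absurd (hinj' 1 0 (by omega) (by omega) h1) (by omega)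
                  · exact Or.inl h2
                · exact absurd ht (by omega)
              · rcases hWat _ hxW (m + 2) (by omega) (Sym2.mem_mk_left _ _) with
                  h | ⟨ht, h⟩ | ⟨ht, h⟩ | ⟨u, hu, h⟩ | ⟨ht, h⟩
                · exact (hxT (by rw [h]; exact hRlT)).elim
                · exact absurd ht (by omega)
                · rcases Sym2.eq_iff.mp h with ⟨h1, h2⟩ | ⟨h1, h2⟩
                  · exact Or.inl h2
                  · exact absurd (hinj' (m + 2) 0 (by omega) (by omega) h1) (by omega)
                · have huu : u = m + 1 := by omega
                  subst huu
                  exact (hxT (by rw [h]; exact hCl2T)).elim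
                · exact absurd ht (by omega)
            rcases reachClosed hcl (hT'.2.2 (v 1) (hS 1 (by omega)) (v (m + 3))
                (hS (m + 3) (by omega))) (Or.inr (Or.inl rfl)) with h | h | h
            · exact hvne (m + 3) 0 (by omega) (by omega) (by omega) h
            · exact hvne (m + 3) 1 (by omega) (by omega) (by omega) h
            · exact hvne (m + 3) (m + 2) (by omega) (by omega) (by omega) h
          · -- i ≥ 2 : both chords at v i lie in T, so the complement misses v i
            obtain ⟨j, rfl⟩ : ∃ j, i = j + 2 := ⟨i - 2, by omega⟩
            have hCiT : s(v (j + 2), v (j + 3)) ∈ T := by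
              have f1 := hltc (j + 2) (by omega) (by omega)
              have f2 := hltc (j + 3) (by omega) (by omega)
              have f3 := hvne (j + 2) (j + 3) (by omega) (by omega) (by omega)
              refine (hagree s(v (j + 2), v (j + 3)) (hWC (j + 2) (by omega)) (hKlt _ _ _ _ (hvn _ (by omega)) (hvn _ (by omega))
                (hvn _ (by omega)) (hvn _ (by omega)) ?_)).mpr (hPC (j + 2) (by omega))
              simp only [min_def, max_def]; split_ifs <;> omega
            have hCpT : s(v (j + 1), v (j + 2)) ∈ T := by
              have f1 := hltc (j + 1) (by omega) (by omega)
              have f2 := hltc (j + 2) (by omega) (by omega)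
              have f3 := hvne (j + 1) (j + 2) (by omega) (by omega) (by omega)
              refine (hagree s(v (j + 1), v (j + 2)) (hWC (j + 1) (by omega)) (hKlt _ _ _ _ (hvn _ (by omega)) (hvn _ (by omega))
                (hvn _ (by omega)) (hvn _ (by omega)) ?_)).mpr (hPC (j + 1) (by omega))
              simp only [min_def, max_def]; split_ifs <;> omega
            obtain ⟨y, hy⟩ := reachStart (hT'.2.2 (v (j + 2)) (hS (j + 2) (by omega)) (v (m + 3))
              (hS (m + 3) (by omega))) (hvne (j + 2) (m + 3) (by omega) (by omega) (by omega))
            obtain ⟨⟨hyW, hyT⟩, hyne⟩ := (fromEdgeSet_adj _).mp hy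
            rcases hWat _ hyW (j + 2) (by omega) (Sym2.mem_mk_left _ _) with
              h | ⟨ht, h⟩ | ⟨ht, h⟩ | ⟨u, hu, h⟩ | ⟨ht, h⟩
            · exact hyT (by rw [h]; exact hfT.1)
            · have : j + 3 = j + 2 + 1 := rfl
              exact hyT (by rw [h]; exact hCiT)
            · omega
            · have huu : u = j + 1 := by omega
              subst huu
              exact hyT (by rw [h]; exact hCpT)
            · omega
      · -- f is the chord s(v (m+2), v 0)
        have hRlT : s(v (m + 3), v (m + 2)) ∈ T := by
          have f1 := hltc (m + 2) (by omega) (by omega)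
          have f2 := hc0
          have f3 := hlt0 (m + 2) (by omega) (by omega)
          refine (hagree _ (hWR (m + 2) (by omega)) (hKlt _ _ _ _ (hvn _ (by omega)) (hvn _ (by omega))
            (hvn _ (by omega)) (hvn _ (by omega)) ?_)).mpr hPRl
          simp only [min_def, max_def]; split_ifs <;> omega
        have hCl2T : s(v (m + 1), v (m + 2)) ∈ T := by
          have f1 := hlt0 (m + 1) (by omega) (by omega)
          have f2 := hlt0 (m + 2) (by omega) (by omega)
          have f3 := hvne (m + 1) (m + 2) (by omega) (by omega) (by omega)
          refine (hagree s(v (m + 1), v (m + 2)) (hWC (m + 1) (by omega)) (hKlt _ _ _ _ (hvn _ (by omega)) (hvn _ (by omega))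
            (hvn _ (by omega)) (hvn _ (by omega)) ?_)).mpr (hPC (m + 1) (by omega))
          simp only [min_def, max_def]; split_ifs <;> omega
        obtain ⟨y, hy⟩ := reachStart (hT'.2.2 (v (m + 2)) (hS (m + 2) (by omega)) (v (m + 3))
          (hS (m + 3) (by omega))) (hvne (m + 2) (m + 3) (by omega) (by omega) (by omega))
        obtain ⟨⟨hyW, hyT⟩, hyne⟩ := (fromEdgeSet_adj _).mp hy
        rcases hWat _ hyW (m + 2) (by omega) (Sym2.mem_mk_left _ _) with
          h | ⟨ht, h⟩ | ⟨ht, h⟩ | ⟨u, hu, h⟩ | ⟨ht, h⟩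
        · exact hyT (by rw [h]; exact hRlT)
        · omega
        · exact hyT (by rw [h]; exact hfT.1)
        · have huu : u = m + 1 := by omega
          subst huu
          exact hyT (by rw [h]; exact hCl2T)
        · omega
  -- Parts 5 and 6
  have hP5 : s(v (m + 2), v (m + 3)) ∈ pathE v (m + 4) := hPC (m + 2) (le_refl _)
  have hedgeGT : ∀ a b c d : ℕ,
      (min a b < min c d ∨ (min a b = min c d ∧ max a b < max c d)) → edgeGT s(a, b) s(c, d) := by
    intro a b c d h
    unfold edgeGT
    simp only [Sym2.inf_mk, Sym2.sup_mk, inf_eq_min, sup_eq_max]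
    exact h
  have hP6 : ∀ f ∈ (pathE v (m + 4) \ altPathE v (m + 4)) ∪
      (altPathE v (m + 4) \ pathE v (m + 4)),
      f ≠ s(v (m + 2), v (m + 3)) → edgeGT s(v (m + 2), v (m + 3)) f := by
    have f1 := hsecond
    have f2 := hltc (m + 2) (by omega) (by omega)
    have f3 := hltc 1 (by omega) (by omega)
    have f4 := hc0
    have f5 := hlt0 1 (by omega) (by omega)
    have f6 := hlt0 (m + 2) (by omega) (by omega)
    rintro f (⟨⟨i, hi, rfl⟩, hnalt⟩ | ⟨halt, hnp⟩) hne6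
    · have hi0 : i = 0 := by
        by_contra h0
        rcases Nat.lt_or_ge (i + 2) (m + 4) with h2 | h2
        · exact hnalt (Or.inr (Or.inr ⟨i, by omega, h2, rfl⟩))
        · have hieq : i = m + 2 := by omega
          subst hieq
          exact hne6 rfl
      subst hi0
      have f7 := hvne 0 1 (by omega) (by omega) (by omega)
      apply hedgeGT
      simp only [zero_add, min_def, max_def]; split_ifs <;> omega
    · rcases halt with h | h | ⟨i, h1, h2, h⟩
      · rw [e31] at h
        subst h
        apply hedgeGT
        simp only [min_def, max_def]; split_ifs <;> omega
      · rw [e22] at h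
        subst h
        apply hedgeGT
        simp only [min_def, max_def]; split_ifs <;> omega
      · exact absurd (show f ∈ pathE v (m + 4) by rw [h]; exact hPC i (by omega)) hnp
  exact ⟨hPart1, hPart2, hPart3, hPart4, hP5, hP6⟩
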